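/- Let c be any symplectic capacity on ℝ^{2n}, let X, Y be real symmetric n×n matrices with X positive definite, and let Ω_{XY} = {z ∈ ℝ^{2n} : M_{XY} z·z ≤ ℏ Tr X} be the Fermi ellipsoid, where M_{XY} = [[X² + Y², Y],[Y, I]]. Then c(Ω_{XY}) = πℏ (Tr X)/ω_max, where ω_max is the largest eigenvalue of X. -/

import Mathlib

open Matrix

/-- The standard symplectic matrix `J = [[0, I],[−I, 0]]`. -/
def stdJ (n : ℕ) : Matrix (Fin n ⊕ Fin n) (Fin n ⊕ Fin n) ℝ :=
  fromBlocks 0 1 (-1) 0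

/-- A real `2n×2n` matrix is symplectic if `Sᵀ J S = J`. -/
def IsSymplecticMat {n : ℕ} (S : Matrix (Fin n ⊕ Fin n) (Fin n ⊕ Fin n) ℝ) : Prop :=
  Sᵀ * stdJ n * S = stdJ n

/-- The closed Euclidean ball `B^{2n}(R)` of radius `R` centered at `0` in `ℝ^{2n}`. -/
def euclBall (n : ℕ) (R : ℝ) : Set (Fin n ⊕ Fin n → ℝ) :=
  {z | ∑ i, (z i) ^ 2 ≤ R ^ 2}

/-- The symplectic cylinder `Z_j(R) = {z : x_j² + p_j² ≤ R²}`. -/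
def symplCyl (n : ℕ) (j : Fin n) (R : ℝ) : Set (Fin n ⊕ Fin n → ℝ) :=
  {z | (z (Sum.inl j)) ^ 2 + (z (Sum.inr j)) ^ 2 ≤ R ^ 2}

/-- A symplectic capacity on `ℝ^{2n}`: a `[0,∞]`-valued function on subsets of phase space that
is monotone, invariant under affine symplectic maps, conformal, and normalized on balls and
cylinders. -/
structure IsSymplecticCapacity (n : ℕ) (c : Set (Fin n ⊕ Fin n → ℝ) → ENNReal) : Prop where
  mono : ∀ Ω Ω' : Set (Fin n ⊕ Fin n → ℝ), Ω ⊆ Ω' → c Ω ≤ c Ω'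
  sympl_inv : ∀ S : Matrix (Fin n ⊕ Fin n) (Fin n ⊕ Fin n) ℝ, IsSymplecticMat S →
    ∀ z₀ : Fin n ⊕ Fin n → ℝ, ∀ Ω : Set (Fin n ⊕ Fin n → ℝ),
      c ((fun z => S.mulVec z + z₀) '' Ω) = c Ω
  conformal : ∀ lam : ℝ, 0 < lam → ∀ Ω : Set (Fin n ⊕ Fin n → ℝ),
    c ((fun z => lam • z) '' Ω) = ENNReal.ofReal (lam ^ 2) * c Ω
  norm_ball : ∀ R : ℝ, 0 < R → c (euclBall n R) = ENNReal.ofReal (Real.pi * R ^ 2)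
  norm_cyl : ∀ (j : Fin n) (R : ℝ), 0 < R →
    c (symplCyl n j R) = ENNReal.ofReal (Real.pi * R ^ 2)

/-- The symplectic capacity of the Fermi ellipsoid
`Ω_{XY} = {z : M_{XY} z·z ≤ ℏ Tr X}` (with `M_{XY} = [[X² + Y², Y],[Y, I]]`) equals
`πℏ (Tr X)/ω_max`, where `ω_max` is the largest eigenvalue of `X`. -/
lemma symp_mul {n : ℕ} {S S' : Matrix (Fin n ⊕ Fin n) (Fin n ⊕ Fin n) ℝ}
    (h : IsSymplecticMat S) (h' : IsSymplecticMat S') : IsSymplecticMat (S * S') := by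
  unfold IsSymplecticMat at *
  rw [transpose_mul]
  calc S'ᵀ * Sᵀ * stdJ n * (S * S') = S'ᵀ * (Sᵀ * stdJ n * S) * S' := by
        simp only [mul_assoc]
    _ = stdJ n := by rw [h, h']

lemma symp_blockdiag {n : ℕ} {A B : Matrix (Fin n) (Fin n) ℝ} (h : Aᵀ * B = 1) :
    IsSymplecticMat (fromBlocks A 0 0 B) := by
  have h2 : Bᵀ * A = 1 := by
    have := congrArg transpose h
    simpa [transpose_mul] using this
  unfold IsSymplecticMat stdJ
  simp [fromBlocks_transpose, fromBlocks_multiply, h, h2]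

lemma symp_lower {n : ℕ} {Y : Matrix (Fin n) (Fin n) ℝ} (hY : Yᵀ = Y) :
    IsSymplecticMat (fromBlocks 1 0 Y 1) := by
  unfold IsSymplecticMat stdJ
  simp [fromBlocks_transpose, fromBlocks_multiply, hY]

lemma symp_surj {n : ℕ} {S : Matrix (Fin n ⊕ Fin n) (Fin n ⊕ Fin n) ℝ}
    (h : IsSymplecticMat S) : Function.Surjective S.mulVec := by
  have hJJ : stdJ n * stdJ n = -1 := by
    unfold stdJ
    rw [fromBlocks_multiply, ← fromBlocks_one (l := Fin n) (m := Fin n) (α := ℝ)]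
    rw [show -fromBlocks (1 : Matrix (Fin n) (Fin n) ℝ) 0 0 1
        = fromBlocks (-1) (-0) (-0) (-1) by rw [fromBlocks_neg]]
    congr 1 <;> simp
  have hleft : ((-(stdJ n)) * Sᵀ * stdJ n) * S = 1 := by
    calc ((-(stdJ n)) * Sᵀ * stdJ n) * S = -(stdJ n * (Sᵀ * stdJ n * S)) := by
          simp only [neg_mul, mul_assoc]
      _ = -(stdJ n * stdJ n) := by rw [h]
      _ = 1 := by rw [hJJ]; simp
  have hright : S * ((-(stdJ n)) * Sᵀ * stdJ n) = 1 := mul_eq_one_comm.mp hleft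
  intro w
  exact ⟨((-(stdJ n)) * Sᵀ * stdJ n).mulVec w, by rw [mulVec_mulVec, hright, one_mulVec]⟩

-- quadratic form of diagonal block matrix
lemma diag_form {n : ℕ} (d : Fin n → ℝ) (w : Fin n ⊕ Fin n → ℝ) :
    w ⬝ᵥ (diagonal (Sum.elim d d)).mulVec w
      = ∑ j, d j * ((w (Sum.inl j)) ^ 2 + (w (Sum.inr j)) ^ 2) := by
  unfold dotProduct
  simp only [mulVec_diagonal]
  rw [Fintype.sum_sum_type, ← Finset.sum_add_distrib]
  exact Finset.sum_congr rfl fun j _ => by simp; ring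

-- pull the quadratic form through M = Tᵀ D T
lemma form_conj {n : ℕ} (T D : Matrix (Fin n ⊕ Fin n) (Fin n ⊕ Fin n) ℝ)
    (z : Fin n ⊕ Fin n → ℝ) :
    z ⬝ᵥ (Tᵀ * D * T).mulVec z = (T.mulVec z) ⬝ᵥ D.mulVec (T.mulVec z) := by
  rw [mul_assoc, ← mulVec_mulVec, dotProduct_mulVec, vecMul_transpose, mulVec_mulVec]

lemma fermi_factor {n : ℕ} (X Y : Matrix (Fin n) (Fin n) ℝ)
    (hY : Y.IsSymm) (hXpd : X.PosDef) :
    ∃ (T : Matrix (Fin n ⊕ Fin n) (Fin n ⊕ Fin n) ℝ) (d : Fin n → ℝ),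
      IsSymplecticMat T ∧ (∀ j, 0 < d j) ∧ spectrum ℝ X = Set.range d ∧
      X.trace = ∑ j, d j ∧
      fromBlocks (X * X + Y * Y) Y Y 1 = Tᵀ * diagonal (Sum.elim d d) * T := by
  have hXh : X.IsHermitian := hXpd.1
  set d : Fin n → ℝ := hXh.eigenvalues with hd
  set O : Matrix (Fin n) (Fin n) ℝ := (hXh.eigenvectorUnitary : Matrix (Fin n) (Fin n) ℝ) with hOdef
  have hdpos : ∀ j, 0 < d j := hXpd.eigenvalues_pos
  have hstar : star O = Oᵀ := by
    rw [Matrix.star_eq_conjTranspose, conjTranspose_eq_transpose_of_trivial]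
  have hOO : Oᵀ * O = 1 := by
    rw [← hstar]; exact (Unitary.mem_iff.mp hXh.eigenvectorUnitary.2).1
  have hOOT : O * Oᵀ = 1 := by
    rw [← hstar]; exact (Unitary.mem_iff.mp hXh.eigenvectorUnitary.2).2
  have hdiag : diagonal ((RCLike.ofReal : ℝ → ℝ) ∘ d) = diagonal d := by
    congr 1
  have hspec : X = O * diagonal d * Oᵀ := by
    rw [← hstar, ← hdiag]; exact hXh.spectral_theorem
  have hrange : spectrum ℝ X = Set.range d := hXh.spectrum_real_eq_range_eigenvalues
  have htrace : X.trace = ∑ j, d j := by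
    rw [hspec, trace_mul_comm, ← mul_assoc, hOO, one_mul, trace_diagonal]
  have hsqrt_ne : ∀ j, Real.sqrt (d j) ≠ 0 := fun j =>
    ne_of_gt (Real.sqrt_pos.mpr (hdpos j))
  have hfun1 : (fun i : Fin n => Real.sqrt (d i) * (Real.sqrt (d i))⁻¹)
      = fun _ : Fin n => (1 : ℝ) := funext fun j => mul_inv_cancel₀ (hsqrt_ne j)
  have hfun2 : (fun i : Fin n => Real.sqrt (d i) * d i * Real.sqrt (d i))
      = fun i => d i * d i := by
    funext j
    nlinarith [Real.mul_self_sqrt (le_of_lt (hdpos j))]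
  have hfun3 : (fun i : Fin n => (Real.sqrt (d i))⁻¹ * d i * (Real.sqrt (d i))⁻¹)
      = fun _ : Fin n => (1 : ℝ) := by
    funext j
    have h1 := Real.mul_self_sqrt (le_of_lt (hdpos j))
    rw [← h1]
    field_simp
    rw [Real.sqrt_sq (Real.sqrt_nonneg _)]
    exact div_self (pow_ne_zero 2 (hsqrt_ne j))
  refine ⟨fromBlocks (diagonal fun j => Real.sqrt (d j)) 0 0
      (diagonal fun j => (Real.sqrt (d j))⁻¹) * fromBlocks Oᵀ 0 0 Oᵀ * fromBlocks 1 0 Y 1,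
    d, ?_, hdpos, hrange, htrace, ?_⟩
  · refine symp_mul (symp_mul (symp_blockdiag ?_) (symp_blockdiag ?_)) (symp_lower hY.eq)
    · rw [diagonal_transpose, diagonal_mul_diagonal, hfun1, diagonal_one]
    · rw [transpose_transpose]; exact hOOT
  · have hXX : X * X = O * diagonal (fun j => d j * d j) * Oᵀ := by
      rw [hspec]
      calc O * diagonal d * Oᵀ * (O * diagonal d * Oᵀ)
          = O * (diagonal d * ((Oᵀ * O) * (diagonal d * Oᵀ))) := by
            simp only [mul_assoc]
        _ = O * (diagonal d * diagonal d) * Oᵀ := by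
            rw [hOO, one_mul]
            simp only [← mul_assoc]
        _ = O * diagonal (fun j => d j * d j) * Oᵀ := by
            rw [diagonal_mul_diagonal]
    have step1 : (fromBlocks (diagonal fun j => Real.sqrt (d j)) 0 0
          (diagonal fun j => (Real.sqrt (d j))⁻¹))ᵀ * diagonal (Sum.elim d d) *
        fromBlocks (diagonal fun j => Real.sqrt (d j)) 0 0
          (diagonal fun j => (Real.sqrt (d j))⁻¹)
        = fromBlocks (diagonal fun j => d j * d j) 0 0 1 := by
      rw [← fromBlocks_diagonal, fromBlocks_transpose, fromBlocks_multiply, fromBlocks_multiply]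
      simp only [transpose_zero, diagonal_transpose, Matrix.mul_zero, Matrix.zero_mul,
        add_zero, zero_add]
      rw [diagonal_mul_diagonal, diagonal_mul_diagonal, diagonal_mul_diagonal,
        diagonal_mul_diagonal, hfun2, hfun3, diagonal_one]
    have step2 : (fromBlocks Oᵀ 0 0 Oᵀ)ᵀ *
          (fromBlocks (diagonal fun j => d j * d j) 0 0 1) * fromBlocks Oᵀ 0 0 Oᵀ
        = fromBlocks (X * X) 0 0 1 := by
      rw [fromBlocks_transpose, fromBlocks_multiply, fromBlocks_multiply]
      simp only [transpose_zero, transpose_transpose, Matrix.mul_zero, Matrix.zero_mul,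
        add_zero, zero_add, Matrix.mul_one, Matrix.one_mul]
      rw [fromBlocks_inj]
      refine ⟨?_, rfl, rfl, hOOT⟩
      rw [hXX, mul_assoc]
    have step3 : (fromBlocks (1 : Matrix (Fin n) (Fin n) ℝ) 0 Y 1)ᵀ *
          (fromBlocks (X * X) 0 0 1) * fromBlocks 1 0 Y 1
        = fromBlocks (X * X + Y * Y) Y Y 1 := by
      rw [fromBlocks_transpose, fromBlocks_multiply, fromBlocks_multiply, hY.eq]
      simp only [transpose_zero, transpose_one, Matrix.mul_zero, Matrix.zero_mul,
        add_zero, zero_add, Matrix.mul_one, Matrix.one_mul]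
    calc fromBlocks (X * X + Y * Y) Y Y 1
        = (fromBlocks (1 : Matrix (Fin n) (Fin n) ℝ) 0 Y 1)ᵀ *
            ((fromBlocks Oᵀ 0 0 Oᵀ)ᵀ *
              ((fromBlocks (diagonal fun j => Real.sqrt (d j)) 0 0
                  (diagonal fun j => (Real.sqrt (d j))⁻¹))ᵀ * diagonal (Sum.elim d d) *
                fromBlocks (diagonal fun j => Real.sqrt (d j)) 0 0
                  (diagonal fun j => (Real.sqrt (d j))⁻¹)) *
              fromBlocks Oᵀ 0 0 Oᵀ) * fromBlocks 1 0 Y 1 := by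
          rw [step1, step2, step3]
      _ = _ := by simp only [transpose_mul, mul_assoc]

theorem capacity_of_fermi_ellipsoid
    (n : ℕ) (hn : 1 ≤ n) (ℏ : ℝ) (hℏ : 0 < ℏ)
    (c : Set (Fin n ⊕ Fin n → ℝ) → ENNReal) (hc : IsSymplecticCapacity n c)
    (X Y : Matrix (Fin n) (Fin n) ℝ)
    (hX : X.IsSymm) (hY : Y.IsSymm) (hXpd : X.PosDef)
    (ωmax : ℝ) (hω : IsGreatest (spectrum ℝ X) ωmax) :
    c {z | z ⬝ᵥ (fromBlocks (X * X + Y * Y) Y Y 1).mulVec z ≤ ℏ * X.trace} =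
      ENNReal.ofReal (Real.pi * ℏ * X.trace / ωmax) := by
  obtain ⟨T, d, hT, hdpos, hrange, htrace, hfact⟩ := fermi_factor X Y hY hXpd
  obtain ⟨j0, hj0⟩ : ∃ j0, d j0 = ωmax := by
    have h1 := hω.1
    rw [hrange] at h1
    obtain ⟨j0, hj0⟩ := h1
    exact ⟨j0, hj0⟩
  have hdle : ∀ j, d j ≤ ωmax := fun j => hω.2 (hrange ▸ Set.mem_range_self j)
  have hωpos : 0 < ωmax := hj0 ▸ hdpos j0
  have htrpos : 0 < X.trace := by
    rw [htrace]
    have : Nonempty (Fin n) := Fin.pos_iff_nonempty.mp hn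
    exact Finset.sum_pos (fun j _ => hdpos j) Finset.univ_nonempty
  set R := Real.sqrt (ℏ * X.trace / ωmax) with hRdef
  have hR2 : R ^ 2 = ℏ * X.trace / ωmax := Real.sq_sqrt (by positivity)
  have hRpos : 0 < R := Real.sqrt_pos.mpr (by positivity)
  set E : Set (Fin n ⊕ Fin n → ℝ) :=
    {w | ∑ j, d j * ((w (Sum.inl j)) ^ 2 + (w (Sum.inr j)) ^ 2) ≤ ℏ * X.trace} with hE
  have himg : (fun z => T.mulVec z + 0) ''
      {z | z ⬝ᵥ (fromBlocks (X * X + Y * Y) Y Y 1).mulVec z ≤ ℏ * X.trace} = E := by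
    ext w
    constructor
    · rintro ⟨z, hz, rfl⟩
      have hz' : z ⬝ᵥ (fromBlocks (X * X + Y * Y) Y Y 1).mulVec z ≤ ℏ * X.trace := hz
      rw [hfact, form_conj, diag_form] at hz'
      simpa [hE] using hz'
    · intro hw
      obtain ⟨z, rfl⟩ := symp_surj hT w
      refine ⟨z, ?_, by simp⟩
      show z ⬝ᵥ (fromBlocks (X * X + Y * Y) Y Y 1).mulVec z ≤ ℏ * X.trace
      rw [hfact, form_conj, diag_form]
      simpa [hE] using hw
  have hcE : c {z | z ⬝ᵥ (fromBlocks (X * X + Y * Y) Y Y 1).mulVec z ≤ ℏ * X.trace} = c E := by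
    rw [← hc.sympl_inv T hT 0
      {z | z ⬝ᵥ (fromBlocks (X * X + Y * Y) Y Y 1).mulVec z ≤ ℏ * X.trace}, himg]
  have hsum_split : ∀ w : Fin n ⊕ Fin n → ℝ,
      ∑ i, (w i) ^ 2 = ∑ j, ((w (Sum.inl j)) ^ 2 + (w (Sum.inr j)) ^ 2) := by
    intro w
    rw [Fintype.sum_sum_type, ← Finset.sum_add_distrib]
  have hball : euclBall n R ⊆ E := by
    intro w hw
    have hw' : ∑ i, (w i) ^ 2 ≤ R ^ 2 := hw
    show ∑ j, d j * ((w (Sum.inl j)) ^ 2 + (w (Sum.inr j)) ^ 2) ≤ ℏ * X.trace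
    calc ∑ j, d j * ((w (Sum.inl j)) ^ 2 + (w (Sum.inr j)) ^ 2)
        ≤ ∑ j, ωmax * ((w (Sum.inl j)) ^ 2 + (w (Sum.inr j)) ^ 2) :=
          Finset.sum_le_sum fun j _ =>
            mul_le_mul_of_nonneg_right (hdle j) (by positivity)
      _ = ωmax * ∑ j, ((w (Sum.inl j)) ^ 2 + (w (Sum.inr j)) ^ 2) := by
          rw [Finset.mul_sum]
      _ = ωmax * ∑ i, (w i) ^ 2 := by rw [hsum_split]
      _ ≤ ωmax * R ^ 2 := mul_le_mul_of_nonneg_left hw' hωpos.le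
      _ = ℏ * X.trace := by
          rw [hR2, mul_div_cancel₀ _ (ne_of_gt hωpos)]
  have hcyl : E ⊆ symplCyl n j0 R := by
    intro w hw
    have hw' : ∑ j, d j * ((w (Sum.inl j)) ^ 2 + (w (Sum.inr j)) ^ 2) ≤ ℏ * X.trace := hw
    have hkey : d j0 * ((w (Sum.inl j0)) ^ 2 + (w (Sum.inr j0)) ^ 2)
        ≤ ∑ j, d j * ((w (Sum.inl j)) ^ 2 + (w (Sum.inr j)) ^ 2) :=
      Finset.single_le_sum (f := fun j => d j * ((w (Sum.inl j)) ^ 2 + (w (Sum.inr j)) ^ 2))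
        (fun j _ => mul_nonneg (hdpos j).le (by positivity)) (Finset.mem_univ j0)
    show (w (Sum.inl j0)) ^ 2 + (w (Sum.inr j0)) ^ 2 ≤ R ^ 2
    rw [hR2, le_div_iff₀ hωpos]
    have := le_trans hkey hw'
    rw [hj0] at this
    linarith
  have hcEval : c E = ENNReal.ofReal (Real.pi * R ^ 2) := by
    refine le_antisymm ?_ ?_
    · rw [← hc.norm_cyl j0 R hRpos]
      exact hc.mono _ _ hcyl
    · rw [← hc.norm_ball R hRpos]
      exact hc.mono _ _ hball
  rw [hcE, hcEval]
  congr 1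
  rw [hR2]
  ring
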